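/- (Theorem 3(ii) of the paper.) Let a, b be natural numbers with 0 < a < b and a/b ≥ 1/2. Then every strategy S satisfies V_S(a/b) ≤ a/b − (a/b)^{C(b,a)} · (1 − a/b), where C(b,a) denotes the binomial coefficient b choose a; consequently V(a/b) ≤ a/b − (a/b)^{C(b,a)} · (1 − a/b). -/

import Mathlib

open MeasureTheory ENNReal

/-- `μ` is the i.i.d. Bernoulli(`p`) product measure on `ℕ → Bool`
(`true` = white), characterized by its values on cylinder sets. -/
def IsBernoulliProduct (p : ℝ) (μ : Measure (ℕ → Bool)) : Prop :=
  IsProbabilityMeasure μ ∧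
    ∀ (s : Finset ℕ) (c : ℕ → Bool),
      μ {x | ∀ n ∈ s, x n = c n} =
        ∏ n ∈ s, (if c n = true then ENNReal.ofReal p else ENNReal.ofReal (1 - p))

/-- A strategy: a pair of measurable functions, each taking the partner's
hat configuration to the index of the hat the player points at. -/
structure Strategy where
  f₁ : (ℕ → Bool) → ℕ
  f₂ : (ℕ → Bool) → ℕ
  meas₁ : Measurable f₁
  meas₂ : Measurable f₂

/-- The winning probability of a strategy, when each player's hats are
distributed according to `μ`, independently. -/
noncomputable def winProb (S : Strategy) (μ : Measure (ℕ → Bool)) : ℝ :=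
  ((μ.prod μ) {x : (ℕ → Bool) × (ℕ → Bool) |
    x.1 (S.f₁ x.2) = true ∧ x.2 (S.f₂ x.1) = true}).toReal

/-- The value of the game: supremum of winning probabilities over all strategies. -/
noncomputable def gameValue (μ : Measure (ℕ → Bool)) : ℝ :=
  ⨆ S : Strategy, winProb S μ


namespace LevineHatAux

open Finset

open Finset

/-- Scaled floor: the integer part of `x * b^k`. -/
noncomputable def Dfl (b k : ℕ) (x : ℝ) : ℕ := ⌊x * (b:ℝ)^k⌋₊

/-- The `n`-th digit of `x` in base `b`. -/
noncomputable def dig (b n : ℕ) (x : ℝ) : ℕ := Dfl b (n+1) x % b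

lemma dig_lt {b : ℕ} (hb : 0 < b) (n : ℕ) (x : ℝ) : dig b n x < b :=
  Nat.mod_lt _ hb

lemma Dfl_succ_div {b : ℕ} (hb : 0 < b) (k : ℕ) (x : ℝ) :
    Dfl b (k+1) x / b = Dfl b k x := by
  have hbR : ((b:ℝ)) ≠ 0 := by exact_mod_cast hb.ne'
  have h : (x * (b:ℝ)^(k+1)) / (b : ℕ) = x * (b:ℝ)^k := by
    field_simp
    ring
  rw [Dfl, ← Nat.floor_div_natCast (x * (b:ℝ)^(k+1)) b, h, Dfl]

lemma Dfl_add {b : ℕ} (hb : 0 < b) (k m : ℕ) (x : ℝ) :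
    Dfl b (k+m) x / b^m = Dfl b k x := by
  induction m with
  | zero => simp
  | succ m ih =>
    have h1 : k + (m+1) = (k+m)+1 := by omega
    have h2 : b^(m+1) = b * b^m := by rw [pow_succ]; ring
    rw [h1, h2, ← Nat.div_div_eq_div_mul, Dfl_succ_div hb]
    exact ih

lemma dig_eq_of_lt {b : ℕ} (hb : 0 < b) {i k : ℕ} (h : i < k) (x : ℝ) :
    dig b i x = Dfl b k x / b^(k-1-i) % b := by
  have h1 : (i+1) + (k-1-i) = k := by omega
  rw [dig, ← Dfl_add hb (i+1) (k-1-i) x, h1]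

/-- Admissible integers: those `m < b^k` whose digits satisfy the constraints `W`. -/
def Mset (b k : ℕ) (W : ℕ → Finset ℕ) : Finset ℕ :=
  (range (b^k)).filter (fun m => ∀ i < k, m / b^(k-1-i) % b ∈ W i)

lemma mem_Mset {b k m : ℕ} {W : ℕ → Finset ℕ} :
    m ∈ Mset b k W ↔ m < b^k ∧ ∀ i < k, m / b^(k-1-i) % b ∈ W i := by
  simp [Mset]

lemma Mset_card {b : ℕ} (hb : 0 < b) (W : ℕ → Finset ℕ) (hW : ∀ i, W i ⊆ range b) :
    ∀ k, (Mset b k W).card = ∏ i ∈ range k, (W i).card := by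
  intro k
  induction k with
  | zero =>
    rw [Mset]
    rw [Finset.filter_true_of_mem (fun m _ => by omega)]
    simp
  | succ k ih =>
    classical
    have hdm : ∀ (m r : ℕ), r < b → (m * b + r) / b = m ∧ (m * b + r) % b = r := by
      intro m r hr
      constructor
      · rw [mul_comm, Nat.mul_add_div hb, Nat.div_eq_of_lt hr, add_zero]
      · rw [mul_comm, Nat.mul_add_mod, Nat.mod_eq_of_lt hr]
    have hkey : Mset b (k+1) W = ((Mset b k W) ×ˢ (W k)).image (fun p => p.1 * b + p.2) := by
      ext m
      simp only [Finset.mem_image, Finset.mem_product, Prod.exists, mem_Mset]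
      constructor
      · rintro ⟨hlt, hdig⟩
        refine ⟨m / b, m % b, ⟨⟨?_, ?_⟩, ?_⟩, ?_⟩
        · rw [Nat.div_lt_iff_lt_mul hb, ← pow_succ]; exact hlt
        · intro i hi
          have := hdig i (by omega)
          rw [show (k+1)-1-i = k-i by omega] at this
          have h2 : b^(k-i) = b * b^(k-1-i) := by
            rw [← pow_succ']
            congr 1
            omega
          rw [h2, ← Nat.div_div_eq_div_mul] at this
          exact this
        · have := hdig k (by omega)
          rw [show (k+1)-1-k = 0 by omega] at this
          simpa using this
        · rw [mul_comm]; exact Nat.div_add_mod m b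
      · rintro ⟨m', r, ⟨⟨hm1, hm2⟩, hr⟩, rfl⟩
        have hrb : r < b := Finset.mem_range.1 (hW k hr)
        constructor
        · calc m' * b + r < (m' + 1) * b := by nlinarith
            _ ≤ b^k * b := Nat.mul_le_mul_right _ hm1
            _ = b^(k+1) := (pow_succ b k).symm
        · intro i hi
          have hdivb : (m' * b + r) / b = m' := (hdm m' r hrb).1
          rcases Nat.lt_or_ge i k with hik | hik
          · have h2 : b^((k+1)-1-i) = b * b^(k-1-i) := by
              rw [← pow_succ']
              congr 1
              omega
            rw [h2, ← Nat.div_div_eq_div_mul, hdivb]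
            exact hm2 i hik
          · have hik' : i = k := by omega
            rw [hik', show (k+1)-1-k = 0 by omega, pow_zero, Nat.div_one, (hdm m' r hrb).2]
            exact hr
    have hinj : Set.InjOn (fun p : ℕ × ℕ => p.1 * b + p.2)
        ((Mset b k W ×ˢ W k : Finset (ℕ × ℕ)) : Set (ℕ × ℕ)) := by
      intro p hp q hq heq
      rw [Finset.mem_coe, Finset.mem_product] at hp hq
      have hp2 : p.2 < b := Finset.mem_range.1 (hW k hp.2)
      have hq2 : q.2 < b := Finset.mem_range.1 (hW k hq.2)
      simp only at heq
      have e1 := (hdm p.1 p.2 hp2).1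
      have e2 := (hdm p.1 p.2 hp2).2
      have e3 := (hdm q.1 q.2 hq2).1
      have e4 := (hdm q.1 q.2 hq2).2
      refine Prod.ext ?_ ?_
      · rw [← e1, ← e3, heq]
      · rw [← e2, ← e4, heq]
    rw [hkey, Finset.card_image_of_injOn hinj, Finset.card_product, ih, prod_range_succ]


lemma Ico_inter_pre {b : ℕ} (hb : 0 < b) (k : ℕ) (W : ℕ → Finset ℕ) :
    Set.Ico (0:ℝ) 1 ∩ {x | ∀ i < k, dig b i x ∈ W i}
      = ⋃ m ∈ Mset b k W, Set.Ico ((m:ℝ)/(b:ℝ)^k) (((m:ℝ)+1)/(b:ℝ)^k) := by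
  have hbk : (0:ℝ) < (b:ℝ)^k := by positivity
  ext x
  simp only [Set.mem_inter_iff, Set.mem_Ico, Set.mem_setOf_eq, Set.mem_iUnion, exists_prop]
  constructor
  · rintro ⟨⟨hx0, hx1⟩, hdig⟩
    have hxb : 0 ≤ x * (b:ℝ)^k := by positivity
    refine ⟨Dfl b k x, ?_, ?_, ?_⟩
    · rw [mem_Mset]
      constructor
      · rw [Dfl, Nat.floor_lt hxb]
        push_cast
        nlinarith
      · intro i hi
        rw [← dig_eq_of_lt hb hi]
        exact hdig i hi
    · rw [div_le_iff₀ hbk]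
      exact Nat.floor_le hxb
    · rw [lt_div_iff₀ hbk]
      exact Nat.lt_floor_add_one _
  · rintro ⟨m, hm, hx0, hx1⟩
    rw [mem_Mset] at hm
    have hm1 : ((m:ℝ)+1) ≤ (b:ℝ)^k := by
      have : (m:ℝ) + 1 ≤ ((b:ℝ))^k := by
        push_cast
        exact_mod_cast Nat.succ_le_of_lt hm.1
      exact this
    have hx0' : (0:ℝ) ≤ x := le_trans (by positivity) hx0
    have hx1' : x < 1 := lt_of_lt_of_le hx1 (by rw [div_le_one hbk]; exact hm1)
    have hD : Dfl b k x = m := by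
      rw [Dfl, Nat.floor_eq_iff (by positivity)]
      constructor
      · rw [div_le_iff₀ hbk] at hx0
        exact hx0
      · rw [lt_div_iff₀ hbk] at hx1
        exact hx1
    refine ⟨⟨hx0', hx1'⟩, fun i hi => ?_⟩
    rw [dig_eq_of_lt hb hi, hD]
    exact hm.2 i hi

lemma volume_pre {b : ℕ} (hb : 0 < b) (k : ℕ) (W : ℕ → Finset ℕ) (hW : ∀ i, W i ⊆ range b) :
    volume (Set.Ico (0:ℝ) 1 ∩ {x | ∀ i < k, dig b i x ∈ W i})
      = (∏ i ∈ range k, ((W i).card : ℝ≥0∞)) / (b:ℝ≥0∞)^k := by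
  have hbk : (0:ℝ) < (b:ℝ)^k := by positivity
  rw [Ico_inter_pre hb k W]
  rw [measure_biUnion_finset ?disj (fun m _ => measurableSet_Ico)]
  · have hvol : ∀ m ∈ Mset b k W,
        volume (Set.Ico ((m:ℝ)/(b:ℝ)^k) (((m:ℝ)+1)/(b:ℝ)^k)) = ((b:ℝ≥0∞)^k)⁻¹ := by
      intro m _
      rw [Real.volume_Ico]
      have h1 : ((m:ℝ)+1)/(b:ℝ)^k - (m:ℝ)/(b:ℝ)^k = ((b:ℝ)^k)⁻¹ := by
        field_simp
        ring
      rw [h1, ENNReal.ofReal_inv_of_pos hbk, ENNReal.ofReal_pow (by positivity),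
        ENNReal.ofReal_natCast]
    rw [Finset.sum_congr rfl hvol, Finset.sum_const, Mset_card hb W hW k, nsmul_eq_mul,
      div_eq_mul_inv, ENNReal.inv_pow]
    push_cast
    ring
  case disj =>
    intro m hm m' hm' hne
    have key : ∀ {u v : ℕ}, u < v → ((u:ℝ)+1)/(b:ℝ)^k ≤ (v:ℝ)/(b:ℝ)^k := by
      intro u v h
      rw [div_le_div_iff_of_pos_right hbk]
      push_cast
      exact_mod_cast Nat.succ_le_of_lt h
    apply Set.Ico_disjoint_Ico.2
    rcases lt_or_gt_of_ne hne with h | h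
    · exact le_trans (min_le_left _ _) (le_trans (key h) (le_max_right _ _))
    · exact le_trans (min_le_right _ _) (le_trans (key h) (le_max_left _ _))


lemma volume_cyl {b : ℕ} (hb : 0 < b) (s : Finset ℕ) (V : ℕ → Finset ℕ)
    (hV : ∀ n ∈ s, V n ⊆ range b) :
    volume (Set.Ico (0:ℝ) 1 ∩ {x | ∀ n ∈ s, dig b n x ∈ V n})
      = ∏ n ∈ s, (((V n).card : ℝ≥0∞) / b) := by
  classical
  set k := (s.sup id) + 1 with hk
  have hsk : ∀ n ∈ s, n < k := fun n hn => Nat.lt_succ_of_le (Finset.le_sup (f := id) hn)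
  set W : ℕ → Finset ℕ := fun i => if i ∈ s then V i else range b with hWdef
  have hW : ∀ i, W i ⊆ range b := by
    intro i
    by_cases h : i ∈ s <;> simp [hWdef, h, hV]
  have hset : Set.Ico (0:ℝ) 1 ∩ {x | ∀ n ∈ s, dig b n x ∈ V n}
      = Set.Ico (0:ℝ) 1 ∩ {x | ∀ i < k, dig b i x ∈ W i} := by
    ext x
    simp only [Set.mem_inter_iff, Set.mem_setOf_eq, and_congr_right_iff]
    intro _
    constructor
    · intro h i _
      by_cases his : i ∈ s
      · simpa [hWdef, his] using h i his
      · simp [hWdef, his, Finset.mem_range, dig_lt hb]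
    · intro h n hn
      have := h n (hsk n hn)
      simpa [hWdef, hn] using this
  rw [hset, volume_pre hb k W hW]
  have h1 : ∏ n ∈ s, (((V n).card : ℝ≥0∞) / b) = ∏ i ∈ range k, (((W i).card : ℝ≥0∞) / b) := by
    have e1 : ∏ n ∈ s, (((V n).card : ℝ≥0∞) / b) = ∏ n ∈ s, (((W n).card : ℝ≥0∞) / b) :=
      Finset.prod_congr rfl (fun n hn => by simp [hWdef, hn])
    rw [e1]
    apply Finset.prod_subset (fun n hn => Finset.mem_range.2 (hsk n hn))
    intro i _ his
    simp only [hWdef, if_neg his, Finset.card_range]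
    exact ENNReal.div_self (by exact_mod_cast hb.ne') (by simp)
  rw [h1]
  simp only [div_eq_mul_inv, Finset.prod_mul_distrib, Finset.prod_const, Finset.card_range,
    ENNReal.inv_pow]


abbrev Cfg := ℕ → Bool

lemma measurable_dig (b n : ℕ) : Measurable (dig b n) := by
  have h1 : Measurable fun x : ℝ => x * (b:ℝ)^(n+1) := measurable_id.mul_const _
  have h2 : Measurable (Dfl b (n+1)) := Nat.measurable_floor.comp h1
  exact Measurable.comp (measurable_from_nat (f := fun m : ℕ => m % b)) h2

/-- The coupled Boolean configuration: hat `n` is white iff the `n`-th digit lies in `T`. -/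
noncomputable def ξ (b : ℕ) (T : Finset ℕ) (r : ℝ) : Cfg := fun n => decide (dig b n r ∈ T)

lemma measurable_ξ (b : ℕ) (T : Finset ℕ) : Measurable (ξ b T) := by
  apply measurable_pi_lambda
  intro n
  exact Measurable.comp (measurable_from_nat (f := fun m : ℕ => decide (m ∈ T))) (measurable_dig b n)

lemma measurableSet_bcyl (s : Finset ℕ) (c : ℕ → Bool) :
    MeasurableSet {x : Cfg | ∀ n ∈ s, x n = c n} := by
  have h : {x : Cfg | ∀ n ∈ s, x n = c n} = ⋂ n ∈ s, (fun x : Cfg => x n) ⁻¹' {c n} := by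
    ext x; simp
  rw [h]
  exact MeasurableSet.biInter s.countable_toSet
    (fun n _ => (measurable_pi_apply n) (measurableSet_singleton _))

/-- Two probability measures on `ℕ → Bool` agreeing on all point-cylinders agree. -/
lemma measure_ext_bcyl {μ₁ μ₂ : Measure Cfg} [IsProbabilityMeasure μ₁] [IsProbabilityMeasure μ₂]
    (h : ∀ (s : Finset ℕ) (c : ℕ → Bool),
      μ₁ {x | ∀ n ∈ s, x n = c n} = μ₂ {x | ∀ n ∈ s, x n = c n}) :
    μ₁ = μ₂ := by
  classical
  refine ext_of_generate_finite (measurableCylinders (fun _ : ℕ => Bool))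
    generateFrom_measurableCylinders.symm isPiSystem_measurableCylinders (fun t ht => ?_)
    (by simp)
  obtain ⟨s, S, _, rfl⟩ := (mem_measurableCylinders t).1 ht
  have hfin : S.Finite := Set.toFinite S
  have hdecomp : cylinder s S = ⋃ g ∈ hfin.toFinset, cylinder (α := fun _ : ℕ => Bool) s {g} := by
    ext x
    simp only [cylinder, Set.mem_preimage, Set.mem_iUnion, Set.Finite.mem_toFinset,
      Set.mem_singleton_iff, exists_prop]
    constructor
    · intro hx
      exact ⟨s.restrict x, hx, rfl⟩
    · rintro ⟨g, hg, hEq⟩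
      exact hEq ▸ hg
  have hsingle : ∀ g : (i : s) → Bool, ∃ c : ℕ → Bool,
      cylinder (α := fun _ : ℕ => Bool) s {g} = {x : Cfg | ∀ n ∈ s, x n = c n} := by
    intro g
    refine ⟨fun n => if h : n ∈ s then g ⟨n, h⟩ else true, ?_⟩
    ext x
    simp only [cylinder, Set.mem_preimage, Set.mem_singleton_iff, Set.mem_setOf_eq]
    constructor
    · intro hx n hn
      rw [dif_pos hn]
      rw [← hx]
      rfl
    · intro hx
      funext i
      have := hx i.1 i.2
      rw [dif_pos i.2] at this
      rw [Finset.restrict]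
      simpa using this
  have hmeas : ∀ g : (i : s) → Bool, MeasurableSet (cylinder (α := fun _ : ℕ => Bool) s {g}) :=
    fun g => MeasurableSet.cylinder s (measurableSet_singleton g)
  have hdisj : (hfin.toFinset : Set ((i : s) → Bool)).PairwiseDisjoint
      (fun g => cylinder (α := fun _ : ℕ => Bool) s {g}) := by
    intro g1 _ g2 _ hne
    simp only [Function.onFun]
    apply Set.disjoint_left.2
    intro x hx1 hx2
    simp only [cylinder, Set.mem_preimage, Set.mem_singleton_iff] at hx1 hx2
    exact hne (hx1 ▸ hx2 ▸ rfl)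
  rw [hdecomp, measure_biUnion_finset hdisj (fun g _ => hmeas g),
    measure_biUnion_finset hdisj (fun g _ => hmeas g)]
  apply Finset.sum_congr rfl
  intro g _
  obtain ⟨c, hc⟩ := hsingle g
  rw [hc, h s c]

lemma count_avoid (a b v : ℕ) (hv : v < b) :
    (((range b).powersetCard a).filter (fun T => v ∉ T)).card = (b-1).choose a := by
  classical
  have h : ((range b).powersetCard a).filter (fun T => v ∉ T)
      = ((range b).erase v).powersetCard a := by
    ext T
    simp only [Finset.mem_filter, Finset.mem_powersetCard, Finset.subset_erase]
    tauto
  rw [h, Finset.card_powersetCard, Finset.card_erase_of_mem (Finset.mem_range.2 hv),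
    Finset.card_range]

lemma choose_identity {a b : ℕ} (hab : a < b) :
    b * ((b-1).choose a) = (b.choose a) * (b - a) := by
  have hb1 : b - 1 + 1 = b := by omega
  calc b * ((b-1).choose a) = Nat.succ (b-1) * ((b-1).choose a) := by
        rw [Nat.succ_eq_add_one, hb1]
    _ = Nat.choose (Nat.succ (b-1)) (Nat.succ a) * Nat.succ a :=
        Nat.add_one_mul_choose_eq (b-1) a
    _ = b.choose (a+1) * (a+1) := by rw [Nat.succ_eq_add_one, Nat.succ_eq_add_one, hb1]
    _ = b.choose a * (b - a) := Nat.choose_succ_right_eq b a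


lemma isProb_eta : IsProbabilityMeasure (volume.restrict (Set.Ico (0:ℝ) 1)) := by
  constructor
  rw [Measure.restrict_apply_univ, Real.volume_Ico]
  norm_num

lemma measurableSet_digcyl (b : ℕ) (s : Finset ℕ) (V : ℕ → Finset ℕ) :
    MeasurableSet {r : ℝ | ∀ n ∈ s, dig b n r ∈ V n} := by
  have h : {r : ℝ | ∀ n ∈ s, dig b n r ∈ V n} = ⋂ n ∈ s, (dig b n) ⁻¹' {m | m ∈ V n} := by
    ext r; simp
  rw [h]
  exact MeasurableSet.biInter s.countable_toSet
    (fun n _ => (measurable_dig b n) .of_discrete)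

lemma map_ξ_eq {a b : ℕ} (hab : a < b) (hb : 0 < b) (μ : Measure Cfg)
    (hprob : IsProbabilityMeasure μ)
    (hcyl : ∀ (s : Finset ℕ) (c : ℕ → Bool), μ {x | ∀ n ∈ s, x n = c n} =
        ∏ n ∈ s, (if c n = true then ENNReal.ofReal ((a:ℝ)/b)
          else ENNReal.ofReal (1 - (a:ℝ)/b)))
    (T : Finset ℕ) (hTsub : T ⊆ range b) (hTcard : T.card = a) :
    Measure.map (ξ b T) (volume.restrict (Set.Ico (0:ℝ) 1)) = μ := by
  haveI := isProb_eta
  haveI : IsProbabilityMeasure (Measure.map (ξ b T) (volume.restrict (Set.Ico (0:ℝ) 1))) :=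
    Measure.isProbabilityMeasure_map (measurable_ξ b T).aemeasurable
  apply measure_ext_bcyl
  intro s c
  rw [Measure.map_apply (measurable_ξ b T) (measurableSet_bcyl s c), hcyl s c]
  classical
  set V : ℕ → Finset ℕ := fun n => if c n = true then T else (range b) \ T with hV
  have hVsub : ∀ n ∈ s, V n ⊆ range b := by
    intro n _
    by_cases h : c n = true <;> simp [hV, h, hTsub, Finset.sdiff_subset]
  have hpre : ξ b T ⁻¹' {x | ∀ n ∈ s, x n = c n} = {r | ∀ n ∈ s, dig b n r ∈ V n} := by
    ext r
    simp only [Set.mem_preimage, Set.mem_setOf_eq, ξ]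
    apply forall₂_congr
    intro n _
    by_cases h : c n = true
    · simp [hV, h]
    · have hf : c n = false := by
        cases hcn : c n
        · rfl
        · exact absurd hcn h
      simp [hV, hf, Finset.mem_sdiff, Finset.mem_range, dig_lt hb n r]
  rw [hpre, Measure.restrict_apply (measurableSet_digcyl b s V), Set.inter_comm,
    volume_cyl hb s V hVsub]
  apply Finset.prod_congr rfl
  intro n _
  by_cases h : c n = true
  · simp only [hV, h, if_true]
    rw [hTcard, ENNReal.ofReal_div_of_pos (by exact_mod_cast hb), ENNReal.ofReal_natCast,
      ENNReal.ofReal_natCast]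
  · have hf : c n = false := by
      cases hcn : c n
      · rfl
      · exact absurd hcn h
    simp only [hV, hf, Bool.false_eq_true, if_false]
    rw [Finset.card_sdiff_of_subset hTsub, Finset.card_range, hTcard]
    have h1 : (1 : ℝ) - (a:ℝ)/b = ((b - a : ℕ) : ℝ)/b := by
      rw [Nat.cast_sub hab.le]
      have hbR : ((b:ℝ)) ≠ 0 := by exact_mod_cast hb.ne'
      field_simp
    rw [h1, ENNReal.ofReal_div_of_pos (by exact_mod_cast hb), ENNReal.ofReal_natCast,
      ENNReal.ofReal_natCast]

lemma measurableSet_eval {α : Type*} [MeasurableSpace α] {g : α → ℕ} {h : α → Cfg}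
    (hg : Measurable g) (hh : Measurable h) (v : Bool) :
    MeasurableSet {z | h z (g z) = v} := by
  have he : {z | h z (g z) = v} = ⋃ n, (g ⁻¹' {n}) ∩ (h ⁻¹' {x | x n = v}) := by
    ext z
    simp only [Set.mem_setOf_eq, Set.mem_iUnion, Set.mem_inter_iff, Set.mem_preimage,
      Set.mem_singleton_iff]
    constructor
    · intro hz; exact ⟨g z, rfl, hz⟩
    · rintro ⟨n, rfl, hz⟩; exact hz
  rw [he]
  refine MeasurableSet.iUnion fun n => (hg (measurableSet_singleton n)).inter ?_
  have hev : Measurable (fun x : Cfg => x n) := measurable_pi_apply n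
  exact hh (hev (measurableSet_singleton v))

lemma pow_anti_one {x : ℝ≥0∞} (hx : x ≤ 1) {k N : ℕ} (h : k ≤ N) : x ^ N ≤ x ^ k := by
  calc x ^ N = x ^ k * x ^ (N - k) := by rw [← pow_add]; congr 1; omega
    _ ≤ x ^ k * 1 := mul_le_mul_right (pow_le_one' hx _) _
    _ = x ^ k := mul_one _

end LevineHatAux

open LevineHatAux Finset in
theorem winProb_le_aux {a b : ℕ} (ha : 0 < a) (hab : a < b) (μ : Measure (ℕ → Bool))
    (hμ : IsBernoulliProduct ((a : ℝ) / b) μ) (S : Strategy) :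
    winProb S μ ≤ (a : ℝ) / b - ((a : ℝ) / b) ^ (b.choose a) * (1 - (a : ℝ) / b) := by
  classical
  obtain ⟨hprob, hcyl⟩ := hμ
  haveI := hprob
  have hb : 0 < b := lt_trans ha hab
  set p : ℝ := (a:ℝ)/b with hp
  have hbR : (0:ℝ) < b := by exact_mod_cast hb
  have hp0 : 0 ≤ p := by positivity
  have hp1 : p ≤ 1 := by
    rw [hp, div_le_one hbR]
    exact_mod_cast hab.le
  have hq0 : 0 ≤ 1 - p := by linarith
  set N := b.choose a with hN
  set A : Set (Cfg × Cfg) := {z | z.1 (S.f₁ z.2) = true} with hA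
  set B : Set (Cfg × Cfg) := {z | z.2 (S.f₂ z.1) = true} with hB
  set Win : Set (Cfg × Cfg) := {z | z.1 (S.f₁ z.2) = true ∧ z.2 (S.f₂ z.1) = true} with hWin
  set Kset : Set (Cfg × Cfg) := {z | z.1 (S.f₁ z.2) = true ∧ z.2 (S.f₂ z.1) = false} with hKset
  have mA : MeasurableSet A := measurableSet_eval (S.meas₁.comp measurable_snd) measurable_fst true
  have mB : MeasurableSet B := measurableSet_eval (S.meas₂.comp measurable_fst) measurable_snd true
  have mB' : MeasurableSet {z : Cfg × Cfg | z.2 (S.f₂ z.1) = false} :=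
    measurableSet_eval (S.meas₂.comp measurable_fst) measurable_snd false
  have mWin : MeasurableSet Win := mA.inter mB
  have mK : MeasurableSet Kset := mA.inter mB'
  have hone : ∀ j : ℕ, μ {x : Cfg | x j = true} = ENNReal.ofReal p := by
    intro j
    have h := hcyl {j} (fun _ => true)
    simpa using h
  have hall : ∀ s : Finset ℕ, μ {x : Cfg | ∀ n ∈ s, x n = true} = ENNReal.ofReal p ^ s.card := by
    intro s
    rw [hcyl s (fun _ => true)]
    simp
  have hPA : (μ.prod μ) A = ENNReal.ofReal p := by
    rw [Measure.prod_apply_symm mA]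
    have h : (fun y => μ ((fun x => (x, y)) ⁻¹' A)) = fun y => ENNReal.ofReal p := by
      funext y
      exact hone (S.f₁ y)
    rw [h, lintegral_const, measure_univ, mul_one]
  have hsplit : (μ.prod μ) Win + (μ.prod μ) Kset = ENNReal.ofReal p := by
    rw [← hPA]
    have h1 : Win = A ∩ B := rfl
    have h2 : Kset = A \ B := by
      ext z
      simp only [hKset, hA, hB, Set.mem_setOf_eq, Set.mem_diff, Bool.not_eq_true]
    rw [h1, h2]
    exact measure_inter_add_diff A mB
  -- the coupling construction
  set η : Measure ℝ := volume.restrict (Set.Ico (0:ℝ) 1) with hη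
  haveI : IsProbabilityMeasure η := isProb_eta
  set 𝒯 : Finset (Finset ℕ) := (range b).powersetCard a with h𝒯
  have hcardT : 𝒯.card = N := by rw [h𝒯, Finset.card_powersetCard, Finset.card_range]
  have hTprops : ∀ T ∈ 𝒯, T ⊆ range b ∧ T.card = a := fun T hT => Finset.mem_powersetCard.1 hT
  set G : Finset ℕ → Set (ℝ × Cfg) :=
    fun T => {z | z.2 (S.f₁ (ξ b T z.1)) = true ∧ (ξ b T z.1) (S.f₂ z.2) = false} with hG
  have mGhalf : ∀ T, MeasurableSet {z : ℝ × Cfg | z.2 (S.f₁ (ξ b T z.1)) = true} := fun T =>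
    measurableSet_eval (S.meas₁.comp ((measurable_ξ b T).comp measurable_fst)) measurable_snd true
  have mG : ∀ T, MeasurableSet (G T) := by
    intro T
    exact (mGhalf T).inter
      (measurableSet_eval (S.meas₂.comp measurable_snd)
        ((measurable_ξ b T).comp measurable_fst) false)
  have hGmap : ∀ T ∈ 𝒯, (η.prod μ) (G T) = (μ.prod μ) Kset := by
    intro T hT
    have hmapT : Measure.map (ξ b T) η = μ :=
      map_ξ_eq hab hb μ hprob hcyl T (hTprops T hT).1 (hTprops T hT).2
    have hmm : Measurable fun z : ℝ × Cfg => (z.2, ξ b T z.1) :=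
      measurable_snd.prodMk ((measurable_ξ b T).comp measurable_fst)
    have hmeq : Measure.map (fun z : ℝ × Cfg => (z.2, ξ b T z.1)) (η.prod μ) = μ.prod μ := by
      have hc : (fun z : ℝ × Cfg => (z.2, ξ b T z.1)) = Prod.swap ∘ Prod.map (ξ b T) id := rfl
      rw [hc, ← Measure.map_map measurable_swap ((measurable_ξ b T).prodMap measurable_id),
        ← Measure.map_prod_map _ _ (measurable_ξ b T) measurable_id, hmapT, Measure.map_id,
        Measure.prod_swap]
    have hpreim : G T = (fun z : ℝ × Cfg => (z.2, ξ b T z.1)) ⁻¹' Kset := rfl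
    rw [hpreim, ← Measure.map_apply hmm mK, hmeq]
  set E : Set (ℝ × Cfg) := {z | ∀ T ∈ 𝒯, z.2 (S.f₁ (ξ b T z.1)) = true} with hE
  have mE : MeasurableSet E := by
    have h : E = ⋂ T ∈ 𝒯, {z : ℝ × Cfg | z.2 (S.f₁ (ξ b T z.1)) = true} := by
      ext z
      simp [hE]
    rw [h]
    exact MeasurableSet.biInter 𝒯.countable_toSet (fun T _ => mGhalf T)
  have hpoint : ∀ z : ℝ × Cfg, E.indicator (fun _ => (((b-1).choose a : ℕ) : ℝ≥0∞)) z
      ≤ ∑ T ∈ 𝒯, (G T).indicator (fun _ => (1:ℝ≥0∞)) z := by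
    intro z
    by_cases hz : z ∈ E
    · rw [Set.indicator_of_mem hz]
      have hcount : ∑ T ∈ 𝒯, (G T).indicator (fun _ => (1:ℝ≥0∞)) z
          = ((𝒯.filter (fun T => z ∈ G T)).card : ℝ≥0∞) := by
        simp only [Set.indicator_apply]
        rw [Finset.sum_boole]
      rw [hcount]
      have hfe : 𝒯.filter (fun T => z ∈ G T)
          = 𝒯.filter (fun T => dig b (S.f₂ z.2) z.1 ∉ T) := by
        apply Finset.filter_congr
        intro T hT
        have h1 : z ∈ G T ↔ (ξ b T z.1) (S.f₂ z.2) = false := by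
          simp only [hG, Set.mem_setOf_eq]
          have h2 := hz T hT
          simp [h2]
        rw [h1]
        show (decide (dig b (S.f₂ z.2) z.1 ∈ T) = false) ↔ _
        simp
      rw [hfe, count_avoid a b _ (dig_lt hb _ _)]
    · rw [Set.indicator_of_notMem hz]
      exact zero_le
  have hlowE : (((b-1).choose a : ℕ) : ℝ≥0∞) * (η.prod μ) E ≤ (N : ℝ≥0∞) * (μ.prod μ) Kset := by
    calc (((b-1).choose a : ℕ) : ℝ≥0∞) * (η.prod μ) E
        = ∫⁻ z, E.indicator (fun _ => (((b-1).choose a : ℕ) : ℝ≥0∞)) z ∂(η.prod μ) :=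
          (lintegral_indicator_const mE _).symm
      _ ≤ ∫⁻ z, ∑ T ∈ 𝒯, (G T).indicator (fun _ => (1:ℝ≥0∞)) z ∂(η.prod μ) :=
          lintegral_mono hpoint
      _ = ∑ T ∈ 𝒯, ∫⁻ z, (G T).indicator (fun _ => (1:ℝ≥0∞)) z ∂(η.prod μ) :=
          lintegral_finset_sum _ (fun T _ => measurable_const.indicator (mG T))
      _ = ∑ T ∈ 𝒯, (η.prod μ) (G T) := by
          apply Finset.sum_congr rfl
          intro T _
          rw [lintegral_indicator_const (mG T), one_mul]
      _ = ∑ T ∈ 𝒯, (μ.prod μ) Kset := Finset.sum_congr rfl hGmap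
      _ = (𝒯.card : ℝ≥0∞) * (μ.prod μ) Kset := by rw [Finset.sum_const, nsmul_eq_mul]
      _ = (N : ℝ≥0∞) * (μ.prod μ) Kset := by rw [hcardT]
  have hEbound : ENNReal.ofReal p ^ N ≤ (η.prod μ) E := by
    rw [Measure.prod_apply mE]
    have hinner : ∀ r : ℝ, ENNReal.ofReal p ^ N ≤ μ (Prod.mk r ⁻¹' E) := by
      intro r
      have hpre : Prod.mk r ⁻¹' E
          = {x : Cfg | ∀ j ∈ 𝒯.image (fun T => S.f₁ (ξ b T r)), x j = true} := by
        ext x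
        simp only [Set.mem_preimage, hE, Set.mem_setOf_eq, Finset.mem_image]
        constructor
        · rintro hx j ⟨T, hT, rfl⟩
          exact hx T hT
        · intro hx T hT
          exact hx _ ⟨T, hT, rfl⟩
      rw [hpre, hall _]
      apply pow_anti_one (ENNReal.ofReal_le_one.2 hp1)
      exact le_trans Finset.card_image_le hcardT.le
    calc ENNReal.ofReal p ^ N = ∫⁻ _, ENNReal.ofReal p ^ N ∂η := by
          rw [lintegral_const, measure_univ, mul_one]
      _ ≤ ∫⁻ r, μ (Prod.mk r ⁻¹' E) ∂η := lintegral_mono hinner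
  have hKge : ENNReal.ofReal ((1-p) * p ^ N) ≤ (μ.prod μ) Kset := by
    have hNpos : 0 < N := Nat.choose_pos hab.le
    have hN0 : (N:ℝ≥0∞) ≠ 0 := by exact_mod_cast hNpos.ne'
    have hNtop : (N:ℝ≥0∞) ≠ ⊤ := ENNReal.natCast_ne_top N
    have hq_eq : ENNReal.ofReal (1-p) * (N:ℝ≥0∞) = (((b-1).choose a : ℕ) : ℝ≥0∞) := by
      rw [← ENNReal.ofReal_natCast ((b-1).choose a), ← ENNReal.ofReal_natCast N,
        ← ENNReal.ofReal_mul hq0]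
      congr 1
      have hid := choose_identity hab
      have hidR : (b:ℝ) * (((b-1).choose a : ℕ) : ℝ) = ((b.choose a : ℕ):ℝ) * ((b:ℝ) - a) := by
        have hcast := congrArg (fun n : ℕ => (n:ℝ)) hid
        push_cast [Nat.cast_sub hab.le] at hcast
        linarith
      have hNR : ((N:ℕ):ℝ) = ((b.choose a : ℕ):ℝ) := by rw [hN]
      rw [hp] at *
      field_simp
      nlinarith [hidR]
    have step : (N:ℝ≥0∞) * (ENNReal.ofReal (1-p) * ENNReal.ofReal p ^ N)
        ≤ (N:ℝ≥0∞) * (μ.prod μ) Kset := by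
      calc (N:ℝ≥0∞) * (ENNReal.ofReal (1-p) * ENNReal.ofReal p ^ N)
          = (ENNReal.ofReal (1-p) * (N:ℝ≥0∞)) * ENNReal.ofReal p ^ N := by ring
        _ = (((b-1).choose a : ℕ):ℝ≥0∞) * ENNReal.ofReal p ^ N := by rw [hq_eq]
        _ ≤ (((b-1).choose a : ℕ):ℝ≥0∞) * (η.prod μ) E := mul_le_mul_right hEbound _
        _ ≤ (N:ℝ≥0∞) * (μ.prod μ) Kset := hlowE
    have hcanc := (ENNReal.mul_le_mul_iff_right hN0 hNtop).1 step
    calc ENNReal.ofReal ((1-p) * p^N)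
        = ENNReal.ofReal (1-p) * ENNReal.ofReal (p^N) := ENNReal.ofReal_mul hq0
      _ = ENNReal.ofReal (1-p) * ENNReal.ofReal p ^ N := by rw [ENNReal.ofReal_pow hp0]
      _ ≤ _ := hcanc
  have hfinW : (μ.prod μ) Win ≠ ⊤ := measure_ne_top _ _
  have hfinK : (μ.prod μ) Kset ≠ ⊤ := measure_ne_top _ _
  have hWKreal : ((μ.prod μ) Win).toReal + ((μ.prod μ) Kset).toReal = p := by
    rw [← ENNReal.toReal_add hfinW hfinK, hsplit, ENNReal.toReal_ofReal hp0]
  have hKreal : (1-p) * p ^ N ≤ ((μ.prod μ) Kset).toReal := by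
    have h1 := ENNReal.toReal_mono hfinK hKge
    rwa [ENNReal.toReal_ofReal (by positivity)] at h1
  have hwp : winProb S μ = ((μ.prod μ) Win).toReal := rfl
  rw [hwp]
  have hmc : (1-p) * p^N = p^N * (1-p) := mul_comm _ _
  linarith

/-- Theorem 3(ii) of the paper: the upper bound
`V(a/b) ≤ a/b − (a/b)^(C(b,a)) · (1 − a/b)` when `a/b ≥ 1/2`. -/
theorem upper_bound_ge_half (a b : ℕ) (ha : 0 < a) (hab : a < b)
    (hge : (1 : ℝ) / 2 ≤ (a : ℝ) / b)
    (μ : Measure (ℕ → Bool)) (hμ : IsBernoulliProduct ((a : ℝ) / b) μ) :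
    (∀ S : Strategy,
      winProb S μ ≤ (a : ℝ) / b - ((a : ℝ) / b) ^ (b.choose a) * (1 - (a : ℝ) / b)) ∧
    gameValue μ ≤ (a : ℝ) / b - ((a : ℝ) / b) ^ (b.choose a) * (1 - (a : ℝ) / b) := by
  have key : ∀ S : Strategy,
      winProb S μ ≤ (a : ℝ) / b - ((a : ℝ) / b) ^ (b.choose a) * (1 - (a : ℝ) / b) :=
    fun S => winProb_le_aux ha hab μ hμ S
  refine ⟨key, ?_⟩
  haveI : Nonempty Strategy := ⟨⟨fun _ => 0, fun _ => 0, measurable_const, measurable_const⟩⟩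
  exact ciSup_le key
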